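/- For every complex y with Re(y) > 0, the function F_0(y) = 1 − √π · e^{y²} · y · erfc(y) satisfies |F_0(y)| < 1, where erfc(y) = (2/√π)∫_y^∞ e^{−u²} du along a ray in the right half plane. -/

import Mathlib

open MeasureTheory Real Complex

/-- The complementary error function along a ray in the right half plane:
`erfc(y) = (2/√π)∫₀^∞ e^{-(y+t)²} dt`. -/
noncomputable def erfcC (y : ℂ) : ℂ :=
  (2 / (Real.sqrt π : ℂ)) * ∫ t in Set.Ioi (0 : ℝ), Complex.exp (-(y + t) ^ 2)

section Aux

variable {y : ℂ}

private noncomputable def gC (y : ℂ) (t : ℝ) : ℂ :=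
  Complex.exp (-(2 * y * t) - (t : ℂ) ^ 2)

private lemma norm_gC (y : ℂ) (t : ℝ) :
    ‖gC y t‖ = Real.exp (-(2 * y.re * t) - t ^ 2) := by
  rw [gC, Complex.norm_exp]
  congr 1
  simp [Complex.sub_re, Complex.neg_re, Complex.mul_re, ← Complex.ofReal_pow]

private lemma cont_gC (y : ℂ) : Continuous (gC y) := by
  unfold gC; fun_prop

private lemma intOn_gC (hy : 0 < y.re) : IntegrableOn (gC y) (Set.Ioi 0) := by
  refine ((integrable_exp_neg_mul_sq one_pos).integrableOn).mono'
    ((cont_gC y).aestronglyMeasurable.restrict) ?_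
  filter_upwards [ae_restrict_mem measurableSet_Ioi] with t ht
  rw [norm_gC]
  apply Real.exp_le_exp.mpr
  have ht' : 0 < t := ht
  nlinarith

private lemma intOn_tgC (hy : 0 < y.re) :
    IntegrableOn (fun t : ℝ => (t : ℂ) * gC y t) (Set.Ioi 0) := by
  refine ((integrable_mul_exp_neg_mul_sq one_pos).integrableOn).mono'
    ((Complex.continuous_ofReal.mul (cont_gC y)).aestronglyMeasurable.restrict) ?_
  filter_upwards [ae_restrict_mem measurableSet_Ioi] with t ht
  have ht' : 0 < t := ht
  rw [norm_mul, Complex.norm_real, Real.norm_eq_abs, abs_of_pos ht', norm_gC]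
  have h1 : Real.exp (-(2 * y.re * t) - t ^ 2) ≤ Real.exp (-1 * t ^ 2) := by
    apply Real.exp_le_exp.mpr; nlinarith
  exact mul_le_mul_of_nonneg_left h1 ht'.le

private lemma hasDeriv_gC (y : ℂ) (x : ℝ) :
    HasDerivAt (fun t : ℝ => -gC y t) ((2 * y + 2 * (x : ℂ)) * gC y x) x := by
  have hz : ∀ z : ℂ, HasDerivAt (fun z : ℂ => -Complex.exp (-(2 * y * z) - z ^ 2))
      ((2 * y + 2 * z) * Complex.exp (-(2 * y * z) - z ^ 2)) z := by
    intro z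
    have h1 : HasDerivAt (fun z : ℂ => -(2 * y * z) - z ^ 2) (-(2 * y) - 2 * z) z := by
      have := (((hasDerivAt_id z).const_mul (2 * y)).neg).sub (hasDerivAt_pow 2 z)
      exact this.congr_deriv (by norm_num)
    have h2 := h1.cexp.neg
    exact h2.congr_deriv (by ring)
  exact (hz x).comp_ofReal

private lemma tendsto_neg_gC (hy : 0 < y.re) :
    Filter.Tendsto (fun t : ℝ => -gC y t) Filter.atTop (nhds 0) := by
  rw [tendsto_zero_iff_norm_tendsto_zero]
  have heq : (fun t : ℝ => ‖-gC y t‖) = fun t => Real.exp (-(2 * y.re * t) - t ^ 2) := by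
    funext t; rw [norm_neg, norm_gC]
  rw [heq]
  have h1 : Filter.Tendsto (fun t : ℝ => 2 * y.re * t + t ^ 2) Filter.atTop Filter.atTop := by
    refine Filter.Tendsto.atTop_add_atTop ?_ ?_
    · exact Filter.Tendsto.const_mul_atTop (by positivity : (0:ℝ) < 2 * y.re) Filter.tendsto_id
    · exact Filter.tendsto_pow_atTop two_ne_zero
  have h3 : Filter.Tendsto (fun t : ℝ => -(2 * y.re * t) - t ^ 2) Filter.atTop Filter.atBot := by
    have h2 : (fun t : ℝ => -(2 * y.re * t) - t ^ 2) = fun t => -(2 * y.re * t + t ^ 2) := by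
      funext t; ring
    rw [h2]; exact Filter.tendsto_neg_atTop_atBot.comp h1
  exact Real.tendsto_exp_atBot.comp h3

private lemma key_identity (hy : 0 < y.re) :
    ∫ t in Set.Ioi (0 : ℝ), (2 * y + 2 * (t : ℂ)) * gC y t = 1 := by
  have hint : IntegrableOn (fun t : ℝ => (2 * y + 2 * (t : ℂ)) * gC y t) (Set.Ioi 0) := by
    have heq : (fun t : ℝ => (2 * y + 2 * (t : ℂ)) * gC y t)
        = fun t => 2 * y * gC y t + 2 * ((t : ℂ) * gC y t) := by funext t; ring
    rw [heq]
    exact ((intOn_gC hy).const_mul _).add ((intOn_tgC hy).const_mul _)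
  have := integral_Ioi_of_hasDerivAt_of_tendsto' (f := fun t : ℝ => -gC y t)
    (a := 0) (m := 0) (fun x _ => hasDeriv_gC y x) hint (tendsto_neg_gC hy)
  rw [this]
  simp [gC]

end Aux

/-- For every complex `y` with `Re y > 0`, the mixing correction factor
`F₀(y) = 1 - √π e^{y²} y erfc(y)` satisfies `|F₀(y)| < 1`. -/
theorem abs_F_zero_lt_one (y : ℂ) (hy : 0 < y.re) :
    ‖1 - (Real.sqrt π : ℂ) * Complex.exp (y ^ 2) * y * erfcC y‖ < 1 := by
  set a := y.re with ha
  -- Step 1: rewrite the main expression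
  have hπ : (Real.sqrt π : ℂ) ≠ 0 := by
    exact_mod_cast (Real.sqrt_pos.mpr Real.pi_pos).ne'
  have hexp : ∀ t : ℝ, 2 * y * (Complex.exp (y ^ 2) * Complex.exp (-(y + t) ^ 2))
      = 2 * y * gC y t := by
    intro t
    rw [← Complex.exp_add, gC]
    congr 1; ring
  have hexpr : (Real.sqrt π : ℂ) * Complex.exp (y ^ 2) * y * erfcC y
      = ∫ t in Set.Ioi (0 : ℝ), 2 * y * gC y t := by
    rw [erfcC]
    rw [show (Real.sqrt π : ℂ) * Complex.exp (y ^ 2) * y *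
        ((2 / (Real.sqrt π : ℂ)) * ∫ t in Set.Ioi (0 : ℝ), Complex.exp (-(y + t) ^ 2))
        = 2 * y * (Complex.exp (y ^ 2) * ∫ t in Set.Ioi (0 : ℝ), Complex.exp (-(y + t) ^ 2))
        by field_simp]
    rw [← MeasureTheory.integral_const_mul, ← MeasureTheory.integral_const_mul]
    congr 1; funext t; rw [← hexp t]
  -- Step 2: use the key integral identity
  have hsplit : (∫ t in Set.Ioi (0 : ℝ), 2 * y * gC y t)
      + (∫ t in Set.Ioi (0 : ℝ), 2 * ((t : ℂ) * gC y t)) = 1 := by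
    rw [← integral_add ((intOn_gC hy).const_mul _) ((intOn_tgC hy).const_mul _)]
    rw [← key_identity hy]
    congr 1; funext t; ring
  have h2 : 1 - (Real.sqrt π : ℂ) * Complex.exp (y ^ 2) * y * erfcC y
      = ∫ t in Set.Ioi (0 : ℝ), 2 * ((t : ℂ) * gC y t) := by
    rw [hexpr, ← hsplit]; ring
  rw [h2]
  -- Step 3: bound by the real integral
  have hb : ‖∫ t in Set.Ioi (0 : ℝ), 2 * ((t : ℂ) * gC y t)‖
      ≤ ∫ t in Set.Ioi (0 : ℝ), 2 * t * Real.exp (-(2 * a * t) - t ^ 2) := by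
    refine (norm_integral_le_integral_norm _).trans_eq ?_
    refine setIntegral_congr_fun measurableSet_Ioi ?_
    intro t ht
    have ht' : (0 : ℝ) < t := ht
    show ‖2 * ((t:ℂ) * gC y t)‖ = 2 * t * Real.exp (-(2 * a * t) - t ^ 2)
    rw [norm_mul, norm_mul, Complex.norm_real, Real.norm_eq_abs, abs_of_pos ht', norm_gC,
      show ‖(2:ℂ)‖ = 2 from by norm_num, ← ha]
    ring
  -- Step 4: the real integral is < 1
  have hIB : IntegrableOn (fun t : ℝ => 2 * t * Real.exp (-t ^ 2)) (Set.Ioi 0) := by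
    have := ((integrable_mul_exp_neg_mul_sq one_pos).const_mul 2).integrableOn
      (s := Set.Ioi (0:ℝ))
    refine this.congr_fun ?_ measurableSet_Ioi
    intro t _; simp; ring
  have hIA : IntegrableOn (fun t : ℝ => 2 * t * Real.exp (-(2 * a * t) - t ^ 2))
      (Set.Ioi 0) := by
    refine hIB.mono' ?_ ?_
    · apply Continuous.aestronglyMeasurable ?_ |>.restrict
      fun_prop
    · filter_upwards [ae_restrict_mem measurableSet_Ioi] with t ht
      have ht' : (0 : ℝ) < t := ht
      rw [Real.norm_eq_abs, abs_mul, abs_of_pos (by positivity : (0:ℝ) < 2 * t),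
        abs_of_pos (Real.exp_pos _)]
      have : Real.exp (-(2 * a * t) - t ^ 2) ≤ Real.exp (-t ^ 2) := by
        apply Real.exp_le_exp.mpr; nlinarith
      nlinarith [Real.exp_pos (-(2 * a * t) - t ^ 2)]
  have hone : ∫ t in Set.Ioi (0 : ℝ), 2 * t * Real.exp (-t ^ 2) = 1 := by
    have hderiv : ∀ x : ℝ, x ∈ Set.Ici (0:ℝ) →
        HasDerivAt (fun t : ℝ => -Real.exp (-t ^ 2)) (2 * x * Real.exp (-x ^ 2)) x := by
      intro x _
      have h1 : HasDerivAt (fun t : ℝ => -t ^ 2) (-(2 * x)) x := by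
        have := (hasDerivAt_pow 2 x).neg
        exact this.congr_deriv (by norm_num)
      have := h1.exp.neg
      exact this.congr_deriv (by ring)
    have htend : Filter.Tendsto (fun t : ℝ => -Real.exp (-t ^ 2)) Filter.atTop (nhds 0) := by
      rw [show (0:ℝ) = -0 by ring]
      apply Filter.Tendsto.neg
      apply Real.tendsto_exp_atBot.comp
      have h2 : (fun t : ℝ => -t ^ 2) = fun t : ℝ => -(t ^ 2) := by funext t; ring
      rw [h2]
      exact Filter.tendsto_neg_atTop_atBot.comp (Filter.tendsto_pow_atTop two_ne_zero)
    have := integral_Ioi_of_hasDerivAt_of_tendsto' hderiv hIB htend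
    rw [this]; simp
  rw [← hone]
  -- strict inequality
  have hI3 : IntegrableOn (fun t : ℝ =>
      2 * t * Real.exp (-t ^ 2) - 2 * t * Real.exp (-(2 * a * t) - t ^ 2)) (Set.Ioi 0) :=
    hIB.sub hIA
  have hnn : 0 ≤ᵐ[volume.restrict (Set.Ioi (0:ℝ))] (fun t : ℝ =>
      2 * t * Real.exp (-t ^ 2) - 2 * t * Real.exp (-(2 * a * t) - t ^ 2)) := by
    filter_upwards [ae_restrict_mem measurableSet_Ioi] with t ht
    have ht' : (0 : ℝ) < t := ht
    have hle : Real.exp (-(2 * a * t) - t ^ 2) ≤ Real.exp (-t ^ 2) := by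
      apply Real.exp_le_exp.mpr; nlinarith
    show (0:ℝ) ≤ 2 * t * Real.exp (-t ^ 2) - 2 * t * Real.exp (-(2 * a * t) - t ^ 2)
    nlinarith
  have hdiff : 0 < ∫ t in Set.Ioi (0 : ℝ),
      (2 * t * Real.exp (-t ^ 2) - 2 * t * Real.exp (-(2 * a * t) - t ^ 2)) := by
    rw [setIntegral_pos_iff_support_of_nonneg_ae hnn hI3]
    have hsub : Set.Ioi (0:ℝ) ⊆ Function.support (fun t : ℝ =>
        2 * t * Real.exp (-t ^ 2) - 2 * t * Real.exp (-(2 * a * t) - t ^ 2)) ∩ Set.Ioi 0 := by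
      intro t ht
      have ht' : (0 : ℝ) < t := ht
      refine ⟨?_, ht⟩
      have hlt : Real.exp (-(2 * a * t) - t ^ 2) < Real.exp (-t ^ 2) :=
        Real.exp_lt_exp.mpr (by nlinarith)
      have hpos : 0 < 2 * t * Real.exp (-t ^ 2) - 2 * t * Real.exp (-(2 * a * t) - t ^ 2) := by
        nlinarith
      exact Function.mem_support.mpr hpos.ne'
    calc (0:ENNReal) < volume (Set.Ioi (0:ℝ)) := by simp [Real.volume_Ioi]
      _ ≤ _ := measure_mono hsub
  rw [integral_sub hIB hIA] at hdiff
  linarith [hb, sub_pos.mp hdiff]
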